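/- Verification of the fluid stress tensor conservation on $\mathbb{R}\times S^2$: on the manifold with metric $g = -dt^2 + \ell^2(d\theta^2 + \sin^2\theta\, d\varphi^2)$, the tensor $T^{\mu\nu} = \mathcal{P}(g^{\mu\nu} + 3u^\mu u^\nu)$ with $u = \gamma(\partial_t + \omega\partial_\varphi)$, $\gamma = (1-\omega^2\ell^2\sin^2\theta)^{-1/2}$, and $\mathcal{P} = \mathcal{P}_0\gamma^3$ satisfies $\nabla_\mu T^{\mu\nu} = 0$, where $\nabla$ is the Levi-Civita connection of $g$. -/

import Mathlib

noncomputable section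

open Real

/-- Partial derivative of a scalar function on coordinate space `Fin n → ℝ`. -/
def pd {n : ℕ} (i : Fin n) (f : (Fin n → ℝ) → ℝ) (x : Fin n → ℝ) : ℝ :=
  fderiv ℝ f x (Pi.single i 1)

/-- Christoffel symbols Γ^l_{ij} of a metric `g` with inverse `ginv`. -/
def christoffel {n : ℕ} (g ginv : (Fin n → ℝ) → Matrix (Fin n) (Fin n) ℝ)
    (l i j : Fin n) (x : Fin n → ℝ) : ℝ :=
  (1/2) * ∑ r, ginv x l r *
    (pd i (fun y => g y r j) x + pd j (fun y => g y r i) x - pd r (fun y => g y i j) x)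

/-- Covariant divergence ∇_μ T^{μν} of a (2,0)-tensor field. -/
def divTensor {n : ℕ} (g ginv : (Fin n → ℝ) → Matrix (Fin n) (Fin n) ℝ)
    (T : (Fin n → ℝ) → Fin n → Fin n → ℝ) (ν : Fin n) (x : Fin n → ℝ) : ℝ :=
  (∑ μ, pd μ (fun y => T y μ ν) x)
    + (∑ μ, ∑ ρ, christoffel g ginv μ μ ρ x * T x ρ ν)
    + (∑ μ, ∑ ρ, christoffel g ginv ν μ ρ x * T x μ ρ)

/-- Metric of ℝ×S² in coordinates (t,θ,φ): g = -dt² + ℓ²(dθ² + sin²θ dφ²). -/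
def gS2 (ℓ : ℝ) (x : Fin 3 → ℝ) : Matrix (Fin 3) (Fin 3) ℝ :=
  Matrix.diagonal ![-1, ℓ ^ 2, ℓ ^ 2 * Real.sin (x 1) ^ 2]

/-- Inverse metric of ℝ×S². -/
def gS2inv (ℓ : ℝ) (x : Fin 3 → ℝ) : Matrix (Fin 3) (Fin 3) ℝ :=
  Matrix.diagonal ![-1, (ℓ ^ 2)⁻¹, (ℓ ^ 2 * Real.sin (x 1) ^ 2)⁻¹]

/-- Lorentz factor γ = (1 - ω²ℓ²sin²θ)^{-1/2}. -/
def γS2 (ℓ ω : ℝ) (x : Fin 3 → ℝ) : ℝ :=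
  (Real.sqrt (1 - ω ^ 2 * ℓ ^ 2 * Real.sin (x 1) ^ 2))⁻¹

/-- Fluid velocity u = γ(∂_t + ω ∂_φ). -/
def uS2 (ℓ ω : ℝ) (x : Fin 3 → ℝ) : Fin 3 → ℝ :=
  ![γS2 ℓ ω x, 0, γS2 ℓ ω x * ω]

/- ### Auxiliary lemmas -/

lemma pd_const {n : ℕ} (i : Fin n) (c : ℝ) (x : Fin n → ℝ) : pd i (fun _ => c) x = 0 := by
  simp [pd]

lemma pd_zero' {n : ℕ} (i : Fin n) {f : (Fin n → ℝ) → ℝ} (x : Fin n → ℝ)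
    (hf : ∀ y, f y = 0) : pd i f x = 0 := by
  rw [show f = fun _ => 0 from funext hf]
  simp [pd]

lemma pd_eval {f : (Fin 3 → ℝ) → ℝ} (F : ℝ → ℝ) (d : ℝ) (i : Fin 3) (x : Fin 3 → ℝ)
    (hf : ∀ y, f y = F (y 1)) (hF : HasDerivAt F d (x 1)) :
    pd i f x = if i = 1 then d else 0 := by
  have hproj : HasFDerivAt (fun y : Fin 3 → ℝ => y 1)
      (ContinuousLinearMap.proj 1 : (Fin 3 → ℝ) →L[ℝ] ℝ) x :=
    (ContinuousLinearMap.proj (R := ℝ) (φ := fun _ : Fin 3 => ℝ) 1).hasFDerivAt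
  have h : HasFDerivAt f (d • (ContinuousLinearMap.proj 1 : (Fin 3 → ℝ) →L[ℝ] ℝ)) x := by
    rw [show f = F ∘ (fun y => y 1) from funext hf]
    exact hF.comp_hasFDerivAt x hproj
  rw [pd, h.fderiv]
  by_cases hi : i = 1 <;> simp [hi, Pi.single_apply]

lemma hasDerivAt_g22 (ℓ : ℝ) (θ : ℝ) :
    HasDerivAt (fun t => ℓ ^ 2 * Real.sin t ^ 2)
      (ℓ ^ 2 * (2 * Real.sin θ * Real.cos θ)) θ := by
  simpa using ((Real.hasDerivAt_sin θ).pow 2).const_mul (ℓ ^ 2)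

lemma pd_g22 (ℓ : ℝ) (i : Fin 3) (x : Fin 3 → ℝ) :
    pd i (fun y => ℓ ^ 2 * Real.sin (y 1) ^ 2) x =
      if i = 1 then ℓ ^ 2 * (2 * Real.sin (x 1) * Real.cos (x 1)) else 0 :=
  pd_eval _ _ i x (fun _ => rfl) (hasDerivAt_g22 ℓ (x 1))

lemma christoffel_vals (ℓ : ℝ) (x : Fin 3 → ℝ) (l i j : Fin 3) :
    christoffel (gS2 ℓ) (gS2inv ℓ) l i j x =
      if l = 1 ∧ i = 2 ∧ j = 2 then -((ℓ ^ 2)⁻¹ * (ℓ ^ 2 * Real.sin (x 1) * Real.cos (x 1)))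
      else if l = 2 ∧ (i = 1 ∧ j = 2 ∨ i = 2 ∧ j = 1) then
        (ℓ ^ 2 * Real.sin (x 1) ^ 2)⁻¹ * (ℓ ^ 2 * Real.sin (x 1) * Real.cos (x 1))
      else 0 := by
  fin_cases l <;> fin_cases i <;> fin_cases j <;>
    simp [christoffel, Fin.sum_univ_three, gS2, gS2inv, Matrix.diagonal, pd_const, pd_g22] <;>
    ring

lemma hasDerivAt_Q (ℓ ω : ℝ) (hω : ω ^ 2 * ℓ ^ 2 < 1) (θ : ℝ) :
    HasDerivAt (fun t => (Real.sqrt (1 - ω ^ 2 * ℓ ^ 2 * Real.sin t ^ 2))⁻¹)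
      (ω ^ 2 * ℓ ^ 2 * Real.sin θ * Real.cos θ *
        ((Real.sqrt (1 - ω ^ 2 * ℓ ^ 2 * Real.sin θ ^ 2))⁻¹) ^ 3) θ := by
  have hqpos : 0 < 1 - ω ^ 2 * ℓ ^ 2 * Real.sin θ ^ 2 := by
    nlinarith [Real.sin_sq_le_one θ, sq_nonneg (Real.sin θ), sq_nonneg ω, sq_nonneg ℓ,
      sq_nonneg (ω * ℓ)]
  have hq : HasDerivAt (fun t => 1 - ω ^ 2 * ℓ ^ 2 * Real.sin t ^ 2)
      (-(ω ^ 2 * ℓ ^ 2 * (2 * Real.sin θ * Real.cos θ))) θ := by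
    have h := (((Real.hasDerivAt_sin θ).pow 2).const_mul (ω ^ 2 * ℓ ^ 2)).const_sub 1
    refine h.congr_deriv ?_
    push_cast
    ring
  have hs : HasDerivAt (fun t => Real.sqrt (1 - ω ^ 2 * ℓ ^ 2 * Real.sin t ^ 2))
      (1 / (2 * Real.sqrt (1 - ω ^ 2 * ℓ ^ 2 * Real.sin θ ^ 2)) *
        (-(ω ^ 2 * ℓ ^ 2 * (2 * Real.sin θ * Real.cos θ)))) θ :=
    (Real.hasDerivAt_sqrt hqpos.ne').comp θ hq
  have hr : Real.sqrt (1 - ω ^ 2 * ℓ ^ 2 * Real.sin θ ^ 2) ≠ 0 := (Real.sqrt_pos.mpr hqpos).ne'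
  have h2 : Real.sqrt (1 - ω ^ 2 * ℓ ^ 2 * Real.sin θ ^ 2) ^ 2
      = 1 - ω ^ 2 * ℓ ^ 2 * Real.sin θ ^ 2 := Real.sq_sqrt hqpos.le
  have := hs.inv hr
  refine this.congr_deriv ?_
  field_simp

/-- **Conservation of the rotating-fluid stress tensor on ℝ×S².**
The tensor T^{μν} = 𝒫(g^{μν} + 3u^μu^ν) with 𝒫 = 𝒫₀γ³ is divergence-free. -/
theorem stress_tensor_conserved_on_sphere (ℓ ω P₀ : ℝ) (hℓ : 0 < ℓ)
    (hω : ω ^ 2 * ℓ ^ 2 < 1) :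
    ∀ x : Fin 3 → ℝ, Real.sin (x 1) ≠ 0 → ∀ ν : Fin 3,
      divTensor (gS2 ℓ) (gS2inv ℓ)
        (fun y μ' ν' => P₀ * γS2 ℓ ω y ^ 3 *
          (gS2inv ℓ y μ' ν' + 3 * uS2 ℓ ω y μ' * uS2 ℓ ω y ν')) ν x = 0 := by
  intro x hx ν
  have hqpos : 0 < 1 - ω ^ 2 * ℓ ^ 2 * Real.sin (x 1) ^ 2 := by
    nlinarith [Real.sin_sq_le_one (x 1), sq_nonneg (Real.sin (x 1)), sq_nonneg ω, sq_nonneg ℓ,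
      sq_nonneg (ω * ℓ)]
  have hr : Real.sqrt (1 - ω ^ 2 * ℓ ^ 2 * Real.sin (x 1) ^ 2) ≠ 0 :=
    (Real.sqrt_pos.mpr hqpos).ne'
  have hQ := hasDerivAt_Q ℓ ω hω (x 1)
  set Q : ℝ → ℝ := fun t => (Real.sqrt (1 - ω ^ 2 * ℓ ^ 2 * Real.sin t ^ 2))⁻¹ with hQdef
  -- pd of the zero components
  have hz : ∀ (i : Fin 3) (μ ν' : Fin 3), (μ = 1 ∧ ν' ≠ 1) ∨ (μ ≠ 1 ∧ ν' = 1) →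
      pd i (fun y => P₀ * γS2 ℓ ω y ^ 3 *
        (gS2inv ℓ y μ ν' + 3 * uS2 ℓ ω y μ * uS2 ℓ ω y ν')) x = 0 := by
    intro i μ ν' hμν
    apply pd_zero'
    intro y
    fin_cases μ <;> fin_cases ν' <;> simp_all [gS2inv, uS2, Matrix.diagonal]
  -- pd of the diagonal-type components in direction ≠ 1
  have h00 : pd 0 (fun y => P₀ * γS2 ℓ ω y ^ 3 *
      (gS2inv ℓ y 0 0 + 3 * uS2 ℓ ω y 0 * uS2 ℓ ω y 0)) x = 0 := by
    have hF : HasDerivAt (fun t => P₀ * Q t ^ 3 * (-1 + 3 * Q t * Q t))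
        _ (x 1) := ((hQ.pow 3).const_mul P₀).mul (((hQ.const_mul 3).mul hQ).const_add (-1))
    have := pd_eval (f := fun y => P₀ * γS2 ℓ ω y ^ 3 *
      (gS2inv ℓ y 0 0 + 3 * uS2 ℓ ω y 0 * uS2 ℓ ω y 0)) _ _ 0 x
      (fun y => by simp [γS2, uS2, gS2inv, Matrix.diagonal, hQdef]) hF
    simpa using this
  have h02 : pd 0 (fun y => P₀ * γS2 ℓ ω y ^ 3 *
      (gS2inv ℓ y 0 2 + 3 * uS2 ℓ ω y 0 * uS2 ℓ ω y 2)) x = 0 := by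
    have hF : HasDerivAt (fun t => P₀ * Q t ^ 3 * (0 + 3 * Q t * (Q t * ω)))
        _ (x 1) :=
      ((hQ.pow 3).const_mul P₀).mul (((hQ.const_mul 3).mul (hQ.mul_const ω)).const_add 0)
    have := pd_eval (f := fun y => P₀ * γS2 ℓ ω y ^ 3 *
      (gS2inv ℓ y 0 2 + 3 * uS2 ℓ ω y 0 * uS2 ℓ ω y 2)) _ _ 0 x
      (fun y => by simp [γS2, uS2, gS2inv, Matrix.diagonal, hQdef]) hF
    simpa using this
  have h20 : pd 2 (fun y => P₀ * γS2 ℓ ω y ^ 3 *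
      (gS2inv ℓ y 2 0 + 3 * uS2 ℓ ω y 2 * uS2 ℓ ω y 0)) x = 0 := by
    have hF : HasDerivAt (fun t => P₀ * Q t ^ 3 * (0 + 3 * (Q t * ω) * Q t))
        _ (x 1) :=
      ((hQ.pow 3).const_mul P₀).mul ((((hQ.mul_const ω).const_mul 3).mul hQ).const_add 0)
    have := pd_eval (f := fun y => P₀ * γS2 ℓ ω y ^ 3 *
      (gS2inv ℓ y 2 0 + 3 * uS2 ℓ ω y 2 * uS2 ℓ ω y 0)) _ _ 2 x
      (fun y => by simp [γS2, uS2, gS2inv, Matrix.diagonal, hQdef]) hF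
    simpa using this
  have h22 : pd 2 (fun y => P₀ * γS2 ℓ ω y ^ 3 *
      (gS2inv ℓ y 2 2 + 3 * uS2 ℓ ω y 2 * uS2 ℓ ω y 2)) x = 0 := by
    have hg : (ℓ ^ 2 * Real.sin (x 1) ^ 2) ≠ 0 := by positivity
    have hF : HasDerivAt (fun t => P₀ * Q t ^ 3 *
        ((ℓ ^ 2 * Real.sin t ^ 2)⁻¹ + 3 * (Q t * ω) * (Q t * ω))) _ (x 1) :=
      ((hQ.pow 3).const_mul P₀).mul (((hasDerivAt_g22 ℓ (x 1)).inv hg).add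
        (((hQ.mul_const ω).const_mul 3).mul (hQ.mul_const ω)))
    have := pd_eval (f := fun y => P₀ * γS2 ℓ ω y ^ 3 *
      (gS2inv ℓ y 2 2 + 3 * uS2 ℓ ω y 2 * uS2 ℓ ω y 2)) _ _ 2 x
      (fun y => by simp [γS2, uS2, gS2inv, Matrix.diagonal, hQdef]) hF
    simpa using this
  have h11 : pd 1 (fun y => P₀ * γS2 ℓ ω y ^ 3 *
      (gS2inv ℓ y 1 1 + 3 * uS2 ℓ ω y 1 * uS2 ℓ ω y 1)) x =
      (P₀ * ((3 : ℕ) * Q (x 1) ^ 2 *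
        (ω ^ 2 * ℓ ^ 2 * Real.sin (x 1) * Real.cos (x 1) * Q (x 1) ^ 3))) *
        ((ℓ ^ 2)⁻¹ + 3 * 0 * 0) := by
    have hF : HasDerivAt (fun t => P₀ * Q t ^ 3 * ((ℓ ^ 2)⁻¹ + 3 * 0 * 0))
        (P₀ * ((3 : ℕ) * Q (x 1) ^ 2 *
          (ω ^ 2 * ℓ ^ 2 * Real.sin (x 1) * Real.cos (x 1) * Q (x 1) ^ 3)) *
          ((ℓ ^ 2)⁻¹ + 3 * 0 * 0)) (x 1) :=
      ((hQ.pow 3).const_mul P₀).mul_const _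
    have := pd_eval (f := fun y => P₀ * γS2 ℓ ω y ^ 3 *
      (gS2inv ℓ y 1 1 + 3 * uS2 ℓ ω y 1 * uS2 ℓ ω y 1)) _ _ 1 x
      (fun y => by simp [γS2, uS2, gS2inv, Matrix.diagonal, hQdef]) hF
    simpa using this
  fin_cases ν
  · -- ν = 0
    simp only [Fin.zero_eta, Fin.mk_one, Fin.reduceFinMk, divTensor, Fin.sum_univ_three]
    rw [h00, hz 1 1 0 (Or.inl ⟨rfl, by decide⟩), h20]
    simp [christoffel_vals, gS2inv, uS2, Matrix.diagonal]
  · -- ν = 1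
    simp only [Fin.zero_eta, Fin.mk_one, Fin.reduceFinMk, divTensor, Fin.sum_univ_three]
    rw [hz 0 0 1 (Or.inr ⟨by decide, rfl⟩), h11, hz 2 2 1 (Or.inr ⟨by decide, rfl⟩)]
    simp [christoffel_vals, gS2inv, uS2, γS2, Matrix.diagonal, hQdef]
    set r := Real.sqrt (1 - ω ^ 2 * ℓ ^ 2 * Real.sin (x 1) ^ 2) with hrdef
    field_simp
    ring
  · -- ν = 2
    simp only [Fin.zero_eta, Fin.mk_one, Fin.reduceFinMk, divTensor, Fin.sum_univ_three]
    rw [h02, hz 1 1 2 (Or.inl ⟨rfl, by decide⟩), h22]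
    simp [christoffel_vals, gS2inv, uS2, Matrix.diagonal]

end
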